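/- arXiv:2605.05905 — 3 statements merged into one kernel-verified Lean document; each statement's English description precedes it below -/
import Mathlib

section
/- Let A be a symmetric positive definite d×d matrix with smallest eigenvalue at least α > 0, and let E be a symmetric d×d matrix with rank at most r ≤ d and operator norm (largest absolute eigenvalue) at most L. Then det(A+E)/det(A) ≤ exp(L·r/α). -/
open Matrix
open scoped MatrixOrder
set_option maxHeartbeats 1000000

lemma myaux_dot_one {n : Type*} [Fintype n] [DecidableEq n] (M : Matrix n n ℝ) (hM : M.IsHermitian) (i : n) :
    dotProduct (star ⇑(hM.eigenvectorBasis i)) ⇑(hM.eigenvectorBasis i) = 1 := by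
  have h1 : (inner ℝ (hM.eigenvectorBasis i) (hM.eigenvectorBasis i) : ℝ) = 1 := by
    rw [real_inner_self_eq_norm_mul_norm, hM.eigenvectorBasis.orthonormal.1 i, mul_one]
  rw [← h1, EuclideanSpace.inner_eq_star_dotProduct, dotProduct_comm]

lemma myaux_psd_smul {n : Type*} [Fintype n] {M : Matrix n n ℝ} (h : M.PosSemidef)
    {t : ℝ} (ht : 0 ≤ t) : (t • M).PosSemidef := by
  exact h.smul ht

lemma myaux_eig_le {n : Type*} [Fintype n] [DecidableEq n] {M : Matrix n n ℝ}
    (hM : M.IsHermitian) {c : ℝ}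
    (h : (c • (1 : Matrix n n ℝ) - M).PosSemidef) (i : n) : hM.eigenvalues i ≤ c := by
  have hv := hM.mulVec_eigenvectorBasis i
  have h2 := h.dotProduct_mulVec_nonneg ⇑(hM.eigenvectorBasis i)
  rw [sub_mulVec, smul_mulVec, one_mulVec, hv, dotProduct_sub, dotProduct_smul,
    dotProduct_smul, myaux_dot_one M hM i] at h2
  simp only [smul_eq_mul, mul_one] at h2
  linarith

lemma myaux_eig_ge {n : Type*} [Fintype n] [DecidableEq n] {M : Matrix n n ℝ}
    (hM : M.IsHermitian) {c : ℝ}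
    (h : (M + c • (1 : Matrix n n ℝ)).PosSemidef) (i : n) : -c ≤ hM.eigenvalues i := by
  have hv := hM.mulVec_eigenvectorBasis i
  have h2 := h.dotProduct_mulVec_nonneg ⇑(hM.eigenvectorBasis i)
  rw [add_mulVec, smul_mulVec, one_mulVec, hv, dotProduct_add, dotProduct_smul,
    dotProduct_smul, myaux_dot_one M hM i] at h2
  simp only [smul_eq_mul, mul_one] at h2
  linarith

lemma myaux_det_one_add {n : Type*} [Fintype n] [DecidableEq n] {M : Matrix n n ℝ}
    (hM : M.IsHermitian) :
    ((1 : Matrix n n ℝ) + M).det = ∏ i, (1 + hM.eigenvalues i) := by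
  set U : Matrix n n ℝ := (Matrix.IsHermitian.eigenvectorUnitary hM : Matrix n n ℝ)
  have hU : U * star U = 1 := (Matrix.mem_unitaryGroup_iff).mp (Matrix.IsHermitian.eigenvectorUnitary hM).2
  have key : (1 : Matrix n n ℝ) + M
      = U * Matrix.diagonal (fun i => 1 + hM.eigenvalues i) * star U := by
    have hspec := hM.spectral_theorem
    rw [Unitary.conjStarAlgAut_apply] at hspec
    have : Matrix.diagonal (fun i => 1 + hM.eigenvalues i)
        = 1 + Matrix.diagonal (RCLike.ofReal ∘ hM.eigenvalues) := by
      rw [← Matrix.diagonal_one, Matrix.diagonal_add]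
      rfl
    rw [this, mul_add, add_mul, mul_one, hU, ← hspec]
  rw [key]
  have hdetU : U.det * (star U).det = 1 := by
    rw [← Matrix.det_mul, hU, Matrix.det_one]
  rw [Matrix.det_mul, Matrix.det_mul, Matrix.det_diagonal]
  calc U.det * (∏ i, (1 + hM.eigenvalues i)) * (star U).det
      = (∏ i, (1 + hM.eigenvalues i)) * (U.det * (star U).det) := by ring
    _ = ∏ i, (1 + hM.eigenvalues i) := by rw [hdetU, mul_one]

/-- Low-rank update bound. -/
theorem stmt1 {d : ℕ} (A E : Matrix (Fin d) (Fin d) ℝ) (α L : ℝ) (r : ℕ)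
    (hα : 0 < α) (hA : A.PosDef) (hAmin : (A - α • (1 : Matrix (Fin d) (Fin d) ℝ)).PosSemidef)
    (hE : E.IsSymm) (hrk : E.rank ≤ r) (hrd : r ≤ d)
    (hEub : ((L • (1 : Matrix (Fin d) (Fin d) ℝ)) - E).PosSemidef)
    (hElb : (E + L • (1 : Matrix (Fin d) (Fin d) ℝ)).PosSemidef) :
    (A + E).det / A.det ≤ Real.exp (L * r / α) := by
  -- trivial case d = 0
  rcases Nat.eq_zero_or_pos d with hd | hd
  · subst hd
    interval_cases r
    simp [Matrix.det_isEmpty]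
  -- L ≥ 0
  have hL : 0 ≤ L := by
    have hsum := (hEub.add hElb).dotProduct_mulVec_nonneg (Pi.single (⟨0, hd⟩ : Fin d) (1:ℝ))
    have : (L • (1 : Matrix (Fin d) (Fin d) ℝ) - E) + (E + L • 1) = (2 * L) • 1 := by
      rw [two_mul, add_smul]
      abel
    rw [this] at hsum
    simp only [smul_mulVec, one_mulVec, dotProduct_smul, smul_eq_mul] at hsum
    have hdot : dotProduct (star (Pi.single (⟨0, hd⟩ : Fin d) (1:ℝ)))
        (Pi.single (⟨0, hd⟩ : Fin d) (1:ℝ)) = 1 := by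
      simp [dotProduct, Pi.single_apply]
    rw [hdot] at hsum
    linarith
  set c : ℝ := L / α with hc
  have hcd : 0 ≤ c := div_nonneg hL hα.le
  -- square root of A
  set B : Matrix (Fin d) (Fin d) ℝ := CFC.sqrt A with hBdef
  have hB : B.PosSemidef := (CFC.sqrt_nonneg A).posSemidef
  have hBB : B * B = A := CFC.sqrt_mul_sqrt_self A hA.posSemidef.nonneg
  have hdetA : 0 < A.det := hA.det_pos
  have hdetB : IsUnit B.det := by
    have : B.det * B.det = A.det := by rw [← Matrix.det_mul, hBB]
    refine isUnit_iff_ne_zero.mpr fun h0 => ?_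
    rw [h0, mul_zero] at this
    exact hdetA.ne this
  have hBinv : B * B⁻¹ = 1 := Matrix.mul_nonsing_inv B hdetB
  have hBinv' : B⁻¹ * B = 1 := Matrix.nonsing_inv_mul B hdetB
  have hBinvH : B⁻¹ᴴ = B⁻¹ := by
    rw [Matrix.conjTranspose_nonsing_inv, hB.1]
  set M : Matrix (Fin d) (Fin d) ℝ := B⁻¹ * E * B⁻¹ with hMdef
  have hM : M.IsHermitian := by
    have hEH : Eᴴ = E := hE
    rw [Matrix.IsHermitian, hMdef, Matrix.conjTranspose_mul, Matrix.conjTranspose_mul,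
      hBinvH, hEH]
    rw [mul_assoc]
  -- A + E = B * (1 + M) * B
  have hfact : A + E = B * ((1 : Matrix (Fin d) (Fin d) ℝ) + M) * B := by
    rw [hMdef, mul_add, add_mul, mul_one, hBB]
    congr 1
    symm
    calc B * (B⁻¹ * E * B⁻¹) * B = (B * B⁻¹) * E * (B⁻¹ * B) := by
          simp only [mul_assoc]
      _ = E := by rw [hBinv, hBinv', one_mul, mul_one]
  have hdetBB : B.det * B.det = A.det := by rw [← Matrix.det_mul, hBB]
  have hdet : (A + E).det / A.det = ((1 : Matrix (Fin d) (Fin d) ℝ) + M).det := by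
    rw [hfact, Matrix.det_mul, Matrix.det_mul]
    rw [show B.det * (1 + M).det * B.det = A.det * (1 + M).det by rw [← hdetBB]; ring]
    rw [mul_comm, mul_div_assoc, div_self hdetA.ne', mul_one]
  -- A⁻¹ bound : c • 1 - L • A⁻¹ is PSD pieces
  have hBBinv : B⁻¹ * B⁻¹ = A⁻¹ := by
    rw [← Matrix.mul_inv_rev, hBB]
  have hconj1 : (L • A⁻¹ - M).PosSemidef := by
    have := hEub.mul_mul_conjTranspose_same B⁻¹
    rw [hBinvH] at this
    have heq : B⁻¹ * (L • (1 : Matrix (Fin d) (Fin d) ℝ) - E) * B⁻¹ = L • A⁻¹ - M := by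
      rw [Matrix.mul_sub, Matrix.sub_mul, hMdef, ← hBBinv]
      congr 1
      rw [Matrix.mul_smul, mul_one, Matrix.smul_mul]
    rwa [heq] at this
  have hconj2 : (M + L • A⁻¹).PosSemidef := by
    have := hElb.mul_mul_conjTranspose_same B⁻¹
    rw [hBinvH] at this
    have heq : B⁻¹ * (E + L • (1 : Matrix (Fin d) (Fin d) ℝ)) * B⁻¹ = M + L • A⁻¹ := by
      rw [Matrix.mul_add, Matrix.add_mul, hMdef, ← hBBinv]
      congr 1
      rw [Matrix.mul_smul, mul_one, Matrix.smul_mul]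
    rwa [heq] at this
  -- α⁻¹ • 1 - A⁻¹ PSD
  have hAinv : ((α⁻¹) • (1 : Matrix (Fin d) (Fin d) ℝ) - A⁻¹).PosSemidef := by
    have h1 := hAmin.mul_mul_conjTranspose_same B⁻¹
    rw [hBinvH] at h1
    have heq : B⁻¹ * (A - α • (1 : Matrix (Fin d) (Fin d) ℝ)) * B⁻¹
        = (1 : Matrix (Fin d) (Fin d) ℝ) - α • A⁻¹ := by
      rw [Matrix.mul_sub, Matrix.sub_mul]
      congr 1
      · rw [← hBB]
        calc B⁻¹ * (B * B) * B⁻¹ = (B⁻¹ * B) * (B * B⁻¹) := by simp only [mul_assoc]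
          _ = 1 := by rw [hBinv, hBinv', one_mul]
      · rw [Matrix.mul_smul, mul_one, Matrix.smul_mul, hBBinv]
    rw [heq] at h1
    have h2 := myaux_psd_smul h1 (t := α⁻¹) (by positivity)
    have heq2 : α⁻¹ • ((1 : Matrix (Fin d) (Fin d) ℝ) - α • A⁻¹)
        = α⁻¹ • (1 : Matrix (Fin d) (Fin d) ℝ) - A⁻¹ := by
      rw [smul_sub, smul_smul, inv_mul_cancel₀ hα.ne', one_smul]
    rwa [heq2] at h2
  have hLAinv : (c • (1 : Matrix (Fin d) (Fin d) ℝ) - L • A⁻¹).PosSemidef := by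
    have h2 := myaux_psd_smul hAinv hL
    have heq : L • ((α⁻¹) • (1 : Matrix (Fin d) (Fin d) ℝ) - A⁻¹)
        = c • (1 : Matrix (Fin d) (Fin d) ℝ) - L • A⁻¹ := by
      rw [smul_sub, smul_smul, hc, div_eq_mul_inv]
    rwa [heq] at h2
  -- eigenvalue bounds for M
  have hub : (c • (1 : Matrix (Fin d) (Fin d) ℝ) - M).PosSemidef := by
    have := hLAinv.add hconj1
    have heq : (c • (1 : Matrix (Fin d) (Fin d) ℝ) - L • A⁻¹) + (L • A⁻¹ - M)
        = c • (1 : Matrix (Fin d) (Fin d) ℝ) - M := by abel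
    rwa [heq] at this
  have hlb : (M + c • (1 : Matrix (Fin d) (Fin d) ℝ)).PosSemidef := by
    have := hconj2.add hLAinv
    have heq : (M + L • A⁻¹) + (c • (1 : Matrix (Fin d) (Fin d) ℝ) - L • A⁻¹)
        = M + c • (1 : Matrix (Fin d) (Fin d) ℝ) := by abel
    rwa [heq] at this
  have heig_le : ∀ i, hM.eigenvalues i ≤ c := myaux_eig_le hM hub
  have heig_ge : ∀ i, -c ≤ hM.eigenvalues i := myaux_eig_ge hM hlb
  -- rank of M
  have hdetBinv : IsUnit B⁻¹.det := by
    refine isUnit_iff_ne_zero.mpr fun h0 => ?_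
    have : B⁻¹.det * B.det = 1 := by rw [← Matrix.det_mul, hBinv', Matrix.det_one]
    rw [h0, zero_mul] at this
    exact one_ne_zero this.symm
  have hrkM : M.rank ≤ r := by
    have h1 : (B⁻¹ * E * B⁻¹).rank = (B⁻¹ * E).rank :=
      Matrix.rank_mul_eq_left_of_isUnit_det B⁻¹ (B⁻¹ * E) hdetBinv
    have h2 : (B⁻¹ * E).rank = E.rank :=
      Matrix.rank_mul_eq_right_of_isUnit_det B⁻¹ E hdetBinv
    rw [hMdef, h1, h2]
    exact hrk
  -- number of nonzero eigenvalues
  have hcard : Fintype.card {i // hM.eigenvalues i ≠ 0} ≤ r := by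
    rw [← hM.rank_eq_card_non_zero_eigs]
    exact hrkM
  -- final computations
  rw [hdet, myaux_det_one_add hM]
  have habs : ∀ i, |1 + hM.eigenvalues i| ≤ 1 + c := by
    intro i
    rw [abs_le]
    constructor
    · nlinarith [heig_ge i]
    · nlinarith [heig_le i]
  classical
  set S : Finset (Fin d) := Finset.univ.filter (fun i => hM.eigenvalues i ≠ 0) with hS
  have hScard : S.card ≤ r := by
    rw [hS, ← Fintype.card_subtype]
    exact hcard
  calc ∏ i, (1 + hM.eigenvalues i) ≤ |∏ i, (1 + hM.eigenvalues i)| := le_abs_self _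
    _ = ∏ i, |1 + hM.eigenvalues i| := by rw [Finset.abs_prod]
    _ = ∏ i ∈ S, |1 + hM.eigenvalues i| := by
        rw [hS]
        rw [← Finset.prod_filter_mul_prod_filter_not Finset.univ (fun i => hM.eigenvalues i ≠ 0)]
        have : ∏ i ∈ Finset.univ.filter (fun i => ¬ hM.eigenvalues i ≠ 0),
            |1 + hM.eigenvalues i| = 1 := by
          apply Finset.prod_eq_one
          intro i hi
          simp only [Finset.mem_filter, not_not] at hi
          rw [hi.2]
          norm_num
        rw [this, mul_one]
    _ ≤ ∏ _i ∈ S, (1 + c) := by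
        apply Finset.prod_le_prod
        · intro i _; exact abs_nonneg _
        · intro i _; exact habs i
    _ = (1 + c) ^ S.card := by rw [Finset.prod_const]
    _ ≤ (1 + c) ^ r := by
        apply pow_le_pow_right₀ (by linarith) hScard
    _ ≤ (Real.exp c) ^ r := by
        apply pow_le_pow_left₀ (by linarith)
        · linarith [Real.add_one_le_exp c]
        -- may need arg
    _ = Real.exp (L * r / α) := by
        rw [← Real.exp_nat_mul]
        congr 1
        rw [hc]
        ring
end

section
/- Given vectors u ∈ ℝ^d and b ∈ ℝ^d with b ≠ 0, there exists a symmetric matrix U ∈ ℝ^{d×d} such that rank(U) ≤ 2, U·b = u, and the operator norm of U equals ‖u‖/‖b‖. -/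
open RealInnerProductSpace

noncomputable def rk1 {E : Type*} [NormedAddCommGroup E] [InnerProductSpace ℝ E]
    (v w : E) : E →L[ℝ] E := (innerSL ℝ v).smulRight w

lemma rk1_apply {E : Type*} [NormedAddCommGroup E] [InnerProductSpace ℝ E]
    (v w x : E) : rk1 v w x = ⟪v, x⟫ • w := rfl

lemma bessel2 {E : Type*} [NormedAddCommGroup E] [InnerProductSpace ℝ E]
    {e f : E} (hee : ⟪e, e⟫ = 1) (hff : ⟪f, f⟫ = 1) (hef : ⟪e, f⟫ = 0) (x : E) :
    ⟪e, x⟫^2 + ⟪f, x⟫^2 ≤ ‖x‖^2 := by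
  have hfe : ⟪f, e⟫ = 0 := by rw [real_inner_comm]; exact hef
  have h0 : (0:ℝ) ≤ ⟪x - ⟪e,x⟫ • e - ⟪f,x⟫ • f, x - ⟪e,x⟫ • e - ⟪f,x⟫ • f⟫ :=
    real_inner_self_nonneg
  simp only [inner_sub_left, inner_sub_right, real_inner_smul_left,
    real_inner_smul_right, hee, hff, hef, hfe] at h0
  have h1 : ⟪x,e⟫ = ⟪e,x⟫ := real_inner_comm e x
  have h2 : ⟪x,f⟫ = ⟪f,x⟫ := real_inner_comm f x
  have h3 : ⟪x,x⟫ = ‖x‖^2 := real_inner_self_eq_norm_sq x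
  rw [h1, h2, h3] at h0
  nlinarith [h0]

theorem auxmain {E : Type*} [NormedAddCommGroup E] [InnerProductSpace ℝ E]
    (u b : E) (hb : b ≠ 0) :
    ∃ U : E →L[ℝ] E,
      (∀ x y : E, ⟪U x, y⟫ = ⟪x, U y⟫) ∧
      LinearMap.rank (U : E →ₗ[ℝ] E) ≤ 2 ∧
      U b = u ∧ ‖U‖ = ‖u‖ / ‖b‖ := by
  have hb0 : (0:ℝ) < ‖b‖ := norm_pos_iff.mpr hb
  have hbne : ‖b‖ ≠ 0 := hb0.ne'
  set e : E := ‖b‖⁻¹ • b with he_def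
  have hee : ⟪e, e⟫ = 1 := by
    rw [he_def, real_inner_smul_left, real_inner_smul_right,
      real_inner_self_eq_norm_sq, sq]
    field_simp
  have hne : ‖e‖ = 1 := by
    have := real_inner_self_eq_norm_sq e
    rw [hee] at this
    nlinarith [norm_nonneg e]
  have heb : ⟪e, b⟫ = ‖b‖ := by
    rw [he_def, real_inner_smul_left, real_inner_self_eq_norm_sq, sq]
    field_simp
  set α : ℝ := ⟪e, u⟫ with hα
  set w : E := u - α • e with hw_def
  have hew : ⟪e, w⟫ = 0 := by
    rw [hw_def, inner_sub_right, real_inner_smul_right, hee]; ring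
  by_cases hw : w = 0
  · -- u = α • e
    have hu : u = α • e := by
      have := hw_def ▸ hw; rwa [sub_eq_zero] at this
    have hnu : ‖u‖ = |α| := by rw [hu, norm_smul, hne, Real.norm_eq_abs, mul_one]
    have hub : ((α/‖b‖) • rk1 e e) b = u := by
      simp only [ContinuousLinearMap.smul_apply, rk1_apply, heb]
      rw [hu, smul_smul]
      congr 1
      field_simp
    refine ⟨(α/‖b‖) • rk1 e e, ?_, ?_, hub, ?_⟩
    · intro x y
      simp only [ContinuousLinearMap.smul_apply, rk1_apply, real_inner_smul_left,
        real_inner_smul_right]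
      rw [real_inner_comm x e]; ring
    · have hrange : LinearMap.range (((α/‖b‖) • rk1 e e : E →L[ℝ] E) : E →ₗ[ℝ] E) ≤
          Submodule.span ℝ ({e} : Set E) := by
        rintro _ ⟨x, rfl⟩
        simp only [ContinuousLinearMap.coe_coe, ContinuousLinearMap.smul_apply, rk1_apply]
        exact Submodule.smul_mem _ _ (Submodule.smul_mem _ _
          (Submodule.mem_span_singleton_self e))
      refine le_trans (Submodule.rank_mono hrange) (le_trans (rank_span_le _) ?_)
      rw [Cardinal.mk_singleton]
      exact one_le_two
    · refine le_antisymm (ContinuousLinearMap.opNorm_le_bound _ (by positivity) ?_) ?_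
      · intro x
        simp only [ContinuousLinearMap.smul_apply, rk1_apply, norm_smul, hne,
          Real.norm_eq_abs, mul_one, hnu]
        have h1 : |⟪e, x⟫| ≤ ‖x‖ := by
          have := abs_real_inner_le_norm e x
          rwa [hne, one_mul] at this
        have h2 : |α / ‖b‖| = |α| / ‖b‖ := by
          rw [abs_div, abs_of_pos hb0]
        rw [h2]
        exact mul_le_mul_of_nonneg_left h1 (by positivity)
      · have h := ContinuousLinearMap.le_opNorm ((α/‖b‖) • rk1 e e) b
        rw [hub] at h
        rw [div_le_iff₀ hb0]
        exact h
  · -- general case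
    have hw0 : (0:ℝ) < ‖w‖ := norm_pos_iff.mpr hw
    have hwne : ‖w‖ ≠ 0 := hw0.ne'
    set ω : ℝ := ‖w‖ with hω
    set f : E := ω⁻¹ • w with hf_def
    have hwf : w = ω • f := by rw [hf_def, smul_inv_smul₀ hwne]
    have hff : ⟪f, f⟫ = 1 := by
      rw [hf_def, real_inner_smul_left, real_inner_smul_right,
        real_inner_self_eq_norm_sq, ← hω, sq]
      field_simp
    have hef : ⟪e, f⟫ = 0 := by
      rw [hf_def, real_inner_smul_right, hew, mul_zero]
    have hfe : ⟪f, e⟫ = 0 := by rw [real_inner_comm]; exact hef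
    have hfb : ⟪f, b⟫ = 0 := by
      have h1 : ⟪f, e⟫ = ‖b‖⁻¹ * ⟪f, b⟫ := by rw [he_def, real_inner_smul_right]
      rw [hfe] at h1
      have := h1.symm
      rcases mul_eq_zero.mp this with h | h
      · exact absurd h (inv_ne_zero hbne)
      · exact h
    have hu : u = α • e + ω • f := by
      rw [← hwf, hw_def]; abel
    have hnu : ‖u‖^2 = α^2 + ω^2 := by
      rw [← real_inner_self_eq_norm_sq, hu]
      simp only [inner_add_left, inner_add_right, real_inner_smul_left,
        real_inner_smul_right, hee, hff, hef, hfe]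
      ring
    set U : E →L[ℝ] E :=
      (α/‖b‖) • (rk1 e e - rk1 f f) + (ω/‖b‖) • (rk1 f e + rk1 e f) with hU
    have hUx : ∀ x : E, U x = ((α * ⟪e,x⟫ + ω * ⟪f,x⟫)/‖b‖) • e
        + ((ω * ⟪e,x⟫ - α * ⟪f,x⟫)/‖b‖) • f := by
      intro x
      simp only [hU, ContinuousLinearMap.add_apply, ContinuousLinearMap.smul_apply,
        ContinuousLinearMap.sub_apply, rk1_apply]
      match_scalars <;> field_simp <;> ring
    have hUb : U b = u := by
      rw [hUx, heb, hfb, hu]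
      match_scalars <;> field_simp <;> ring
    refine ⟨U, ?_, ?_, hUb, ?_⟩
    · intro x y
      simp only [hUx, inner_add_left, inner_add_right, real_inner_smul_left,
        real_inner_smul_right]
      rw [real_inner_comm x e, real_inner_comm x f]
      ring
    · have hrange : LinearMap.range ((U : E →L[ℝ] E) : E →ₗ[ℝ] E) ≤
          Submodule.span ℝ ({e, f} : Set E) := by
        rintro _ ⟨x, rfl⟩
        simp only [ContinuousLinearMap.coe_coe]
        rw [hUx]
        exact Submodule.add_mem _
          (Submodule.smul_mem _ _ (Submodule.subset_span (by simp)))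
          (Submodule.smul_mem _ _ (Submodule.subset_span (by simp)))
      refine le_trans (Submodule.rank_mono hrange) (le_trans (rank_span_le _) ?_)
      refine le_trans (Cardinal.mk_insert_le) ?_
      rw [Cardinal.mk_singleton]
      norm_num
    · refine le_antisymm (ContinuousLinearMap.opNorm_le_bound _ (by positivity) ?_) ?_
      · intro x
        have hBessel : ⟪e,x⟫^2 + ⟪f,x⟫^2 ≤ ‖x‖^2 := bessel2 hee hff hef x
        have hnorm : ‖U x‖^2 = ((α*⟪e,x⟫+ω*⟪f,x⟫)^2 + (ω*⟪e,x⟫-α*⟪f,x⟫)^2)/‖b‖^2 := by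
          rw [← real_inner_self_eq_norm_sq, hUx]
          simp only [inner_add_left, inner_add_right, real_inner_smul_left,
            real_inner_smul_right, hee, hff, hef, hfe]
          field_simp
          ring
        have hsq : ‖U x‖^2 ≤ (‖u‖/‖b‖ * ‖x‖)^2 := by
          rw [hnorm, mul_pow, div_pow, div_mul_eq_mul_div,
            div_le_div_iff_of_pos_right (by positivity)]
          nlinarith [mul_le_mul_of_nonneg_left hBessel
            (by positivity : (0:ℝ) ≤ α^2 + ω^2)]
        exact (pow_le_pow_iff_left₀ (norm_nonneg _) (by positivity) two_ne_zero).mp hsq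
      · have h := ContinuousLinearMap.le_opNorm U b
        rw [hUb] at h
        rw [div_le_iff₀ hb0]
        exact h

/-- Existence of a symmetric rank-≤2 matrix (as an operator) sending `b` to `u`
with operator norm `‖u‖/‖b‖`. -/
theorem stmt3 {d : ℕ} (u b : EuclideanSpace ℝ (Fin d)) (hb : b ≠ 0) :
    ∃ U : EuclideanSpace ℝ (Fin d) →L[ℝ] EuclideanSpace ℝ (Fin d),
      (∀ x y : EuclideanSpace ℝ (Fin d), ⟪U x, y⟫ = ⟪x, U y⟫) ∧
      LinearMap.rank (U : EuclideanSpace ℝ (Fin d) →ₗ[ℝ] EuclideanSpace ℝ (Fin d)) ≤ 2 ∧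
      U b = u ∧ ‖U‖ = ‖u‖ / ‖b‖ := auxmain u b hb
end

section
/- For d×d real matrices: let θ, θ* ∈ ℝ^d with v = θ − θ* ≠ 0, and define the linear map B: S^d → ℝ^d by B(W) = W·v on symmetric matrices (with the Frobenius inner product on S^d). Then the adjoint is B^T(u) = (v·uᵀ + u·vᵀ)/2, and B∘B^T = (v·vᵀ + ‖v‖²·I)/2, with det(B∘B^T) = 2^{1−d}·‖v‖^{2d}. -/
open Matrix

/-- Properties of the map `B : W ↦ W v` on symmetric matrices (Frobenius inner product):
its adjoint is `u ↦ (v uᵀ + u vᵀ)/2`, the composition `B ∘ Bᵀ` is the matrix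
`(v vᵀ + ‖v‖² I)/2`, and `det (B ∘ Bᵀ) = 2^{1−d} ‖v‖^{2d}`. -/
theorem stmt15 {d : ℕ} (v : Fin d → ℝ) (hv : v ≠ 0) :
    (∀ W : Matrix (Fin d) (Fin d) ℝ, W.IsSymm → ∀ u : Fin d → ℝ,
        (W.mulVec v) ⬝ᵥ u =
          Matrix.trace (W * ((1 / 2 : ℝ) • (vecMulVec v u + vecMulVec u v)))) ∧
    (∀ u : Fin d → ℝ,
        ((1 / 2 : ℝ) • (vecMulVec v u + vecMulVec u v)).mulVec v =
          ((1 / 2 : ℝ) • (vecMulVec v v + (v ⬝ᵥ v) • (1 : Matrix (Fin d) (Fin d) ℝ))).mulVec u) ∧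
    ((1 / 2 : ℝ) • (vecMulVec v v + (v ⬝ᵥ v) • (1 : Matrix (Fin d) (Fin d) ℝ))).det =
      (2 : ℝ) ^ ((1 : ℤ) - (d : ℤ)) * (v ⬝ᵥ v) ^ d := by
  have hc : (v ⬝ᵥ v) ≠ 0 := fun h => hv (dotProduct_self_eq_zero.mp h)
  refine ⟨?_, ?_, ?_⟩
  · intro W hW u
    have hWs : ∀ i j, W j i = W i j := fun i j => (congrFun (congrFun hW i) j)
    have hswap : ∑ i, ∑ j, W i j * u j * v i = ∑ i, ∑ j, W i j * v j * u i := by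
      rw [Finset.sum_comm]
      exact Finset.sum_congr rfl fun a _ => Finset.sum_congr rfl fun b _ => by
        rw [hWs b a]; ring
    simp only [dotProduct, mulVec, dotProduct, trace, diag, Matrix.mul_apply,
      Matrix.smul_apply, Matrix.add_apply, vecMulVec_apply, smul_eq_mul, Finset.sum_mul]
    have expand : ∀ i j, W i j * (1 / 2 * (v j * u i + u j * v i)) =
        1 / 2 * (W i j * v j * u i) + 1 / 2 * (W i j * u j * v i) := fun i j => by ring
    simp_rw [expand, Finset.sum_add_distrib, ← Finset.mul_sum, hswap]
    ring
  · intro u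
    funext i
    simp only [mulVec, dotProduct, Matrix.smul_apply, Matrix.add_apply, vecMulVec_apply,
      Matrix.smul_apply, Matrix.one_apply, smul_eq_mul, mul_ite, mul_one, mul_zero]
    have e1 : ∀ x, 1 / 2 * (v i * u x + u i * v x) * v x =
        1 / 2 * (v i * (v x * u x)) + 1 / 2 * u i * (v x * v x) := fun x => by ring
    have e2 : ∀ x, 1 / 2 * (v i * v x + (if i = x then (∑ k, v k * v k) else 0)) * u x =
        1 / 2 * (v i * (v x * u x)) +
          (if i = x then 1 / 2 * (∑ k, v k * v k) * u x else 0) := fun x => by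
      split <;> ring
    simp_rw [e1]
    simp_rw [e2]
    simp_rw [Finset.sum_add_distrib]
    rw [Finset.sum_ite_eq]
    simp only [Finset.mem_univ, if_true]
    rw [← Finset.mul_sum]
    have e3 : ∑ x, 1 / 2 * u i * (v x * v x) = (1 / 2 * ∑ k, v k * v k) * u i := by
      rw [mul_comm (1 / 2 : ℝ) (∑ k, v k * v k), Finset.sum_mul, Finset.sum_mul]
      exact Finset.sum_congr rfl fun x _ => by ring
    rw [e3]
  · have key : ((1 / 2 : ℝ) • (vecMulVec v v + (v ⬝ᵥ v) • (1 : Matrix (Fin d) (Fin d) ℝ)))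
        = ((v ⬝ᵥ v) / 2) • ((1 : Matrix (Fin d) (Fin d) ℝ)
            + replicateCol (Fin 1) ((v ⬝ᵥ v)⁻¹ • v) * replicateRow (Fin 1) v) := by
      rw [show replicateCol (Fin 1) ((v ⬝ᵥ v)⁻¹ • v) * replicateRow (Fin 1) v =
        vecMulVec ((v ⬝ᵥ v)⁻¹ • v) v from (vecMulVec_eq (Fin 1) _ _).symm]
      ext i j
      simp only [Matrix.smul_apply, Matrix.add_apply, vecMulVec_apply, Matrix.smul_apply,
        smul_eq_mul, Pi.smul_apply, Matrix.one_apply]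
      field_simp
      ring
    rw [key, det_smul, show ((1 : Matrix (Fin d) (Fin d) ℝ)
        + replicateCol (Fin 1) ((v ⬝ᵥ v)⁻¹ • v) * replicateRow (Fin 1) v).det =
        1 + v ⬝ᵥ ((v ⬝ᵥ v)⁻¹ • v) from det_one_add_replicateCol_mul_replicateRow _ _]
    have : v ⬝ᵥ ((v ⬝ᵥ v)⁻¹ • v) = 1 := by
      rw [dotProduct_smul, smul_eq_mul, inv_mul_cancel₀ hc]
    rw [this]
    have hd : d ≠ 0 := by
      rintro rfl
      exact hv (Subsingleton.elim _ _)
    rw [zpow_sub₀ (by norm_num : (2:ℝ) ≠ 0), zpow_one, zpow_natCast]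
    rw [Fintype.card_fin, div_pow]
    field_simp
    ring
end
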